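/- Let r₁, r₂ ∈ {2,3,4} with r₁ ≥ r₂, and let L₁, L₂ be positive integers with Lᵢ = 1 if rᵢ = 4, Lᵢ = 2 if rᵢ = 3, Lᵢ ≤ 5 if rᵢ = 2. Let b₁, b₂ be positive integers such that 24 = 24/r₁ + b₁ + 24/r₂ + b₂, (r₁-1)·L₁ = (r₂-1)²·L₂ - b₂, and (r₂-1)·L₂ = (r₁-1)²·L₁ - b₁. Then (r₁, L₁, b₁, r₂, L₂, b₂) is one of: (4,1,6,4,1,6), (4,1,5,3,2,5), (4,1,5,2,4,1), (4,1,4,2,5,2), (3,2,4,3,2,4), (3,2,3,2,5,1). -/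

import Mathlib

theorem stmt_16 (r₁ r₂ L₁ L₂ b₁ b₂ : ℤ)
    (hr₁ : r₁ = 2 ∨ r₁ = 3 ∨ r₁ = 4) (hr₂ : r₂ = 2 ∨ r₂ = 3 ∨ r₂ = 4)
    (hr : r₂ ≤ r₁)
    (hL₁ : 0 < L₁) (hL₂ : 0 < L₂) (hb₁ : 0 < b₁) (hb₂ : 0 < b₂)
    (h14 : r₁ = 4 → L₁ = 1) (h13 : r₁ = 3 → L₁ = 2) (h12 : r₁ = 2 → L₁ ≤ 5)
    (h24 : r₂ = 4 → L₂ = 1) (h23 : r₂ = 3 → L₂ = 2) (h22 : r₂ = 2 → L₂ ≤ 5)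
    (e1 : (24 : ℚ) = 24 / (r₁ : ℚ) + (b₁ : ℚ) + 24 / (r₂ : ℚ) + (b₂ : ℚ))
    (e2 : (r₁ - 1) * L₁ = (r₂ - 1) ^ 2 * L₂ - b₂)
    (e3 : (r₂ - 1) * L₂ = (r₁ - 1) ^ 2 * L₁ - b₁) :
    (r₁, L₁, b₁, r₂, L₂, b₂) = (4, 1, 6, 4, 1, 6) ∨
    (r₁, L₁, b₁, r₂, L₂, b₂) = (4, 1, 5, 3, 2, 5) ∨
    (r₁, L₁, b₁, r₂, L₂, b₂) = (4, 1, 5, 2, 4, 1) ∨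
    (r₁, L₁, b₁, r₂, L₂, b₂) = (4, 1, 4, 2, 5, 2) ∨
    (r₁, L₁, b₁, r₂, L₂, b₂) = (3, 2, 4, 3, 2, 4) ∨
    (r₁, L₁, b₁, r₂, L₂, b₂) = (3, 2, 3, 2, 5, 1) := by
  rcases hr₁ with h1|h1|h1 <;> rcases hr₂ with h2|h2|h2 <;>
    subst h1 <;> subst h2 <;>
    simp only [Prod.mk.injEq] <;>
    (try norm_num at e1 h14 h13 h12 h24 h23 h22 hr ⊢) <;>
    (try norm_cast at e1) <;>
    omega
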